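/- Let M, a, s be positive integers with M > 1 such that ∑_{i=0}^{M-1} (a+i)^2 = s^2. If M = 24·m₁ for a positive integer m₁, then for every integer i ≥ 1 one has m₁ ≢ 3^(2i-1) (mod 3^(2i)) and m₁ ≢ 2·3^(2i-1) (mod 3^(2i)). -/

import Mathlib

lemma sum6 (a : ℕ) : ∀ n : ℕ, 6 * ∑ i ∈ Finset.range (n+1), (a+i)^2
    = (n+1)*(6*a^2 + 6*a*n + n*(2*n+1)) := by
  intro n
  induction n with
  | zero => simp
  | succ k ih =>
    rw [Finset.sum_range_succ, Nat.mul_add, ih]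
    ring

lemma val_of_mod (m₁ c i : ℕ) (hc : c = 1 ∨ c = 2) (hi : 1 ≤ i)
    (h : m₁ ≡ c * 3 ^ (2*i-1) [MOD 3 ^ (2*i)]) :
    padicValNat 3 m₁ = 2*i - 1 ∧ 3 ∣ m₁ := by
  have h31 : (3:ℕ)^(2*i) = 3^(2*i-1) * 3 := by
    rw [← pow_succ]; congr 1; omega
  have hlt : c * 3^(2*i-1) < 3^(2*i) := by
    rw [h31]
    rcases hc with rfl | rfl <;> nlinarith [pow_pos (show (0:ℕ) < 3 by norm_num) (2*i-1)]
  have hmod : m₁ % 3^(2*i) = c * 3^(2*i-1) := by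
    have := h.symm
    unfold Nat.ModEq at this
    rw [Nat.mod_eq_of_lt hlt] at this
    exact this.symm
  obtain ⟨q, hq⟩ : ∃ q, m₁ = 3^(2*i) * q + c * 3^(2*i-1) :=
    ⟨m₁ / 3^(2*i), by rw [← hmod]; exact (Nat.div_add_mod m₁ _).symm⟩
  have hm1 : m₁ = 3^(2*i-1) * (3*q + c) := by
    rw [hq, h31]; ring
  have hcpos : ¬ (3 ∣ (3*q + c)) := by
    rcases hc with rfl | rfl <;> omega
  have hne : (3*q + c) ≠ 0 := by rcases hc with rfl | rfl <;> omega
  haveI : Fact (Nat.Prime 3) := ⟨by norm_num⟩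
  constructor
  · rw [hm1, padicValNat.mul (by positivity) hne,
      padicValNat.prime_pow, padicValNat.eq_zero_of_not_dvd hcpos]
    omega
  · rw [hm1]
    exact Dvd.dvd.mul_right (dvd_pow_self 3 (by omega)) _

lemma key (a s m₁ : ℕ) (ha : 1 ≤ a) (hs : 1 ≤ s)
    (hsum : ∑ i ∈ Finset.range (24*m₁), (a + i) ^ 2 = s ^ 2)
    (hm : 1 ≤ m₁) (h3 : 3 ∣ m₁) : ¬ Odd (padicValNat 3 m₁) := by
  intro hodd
  set n := 24*m₁ - 1 with hn
  have hMn : 24*m₁ = n + 1 := by omega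
  have h6 := sum6 a n
  rw [← hMn, hsum] at h6
  set B := 6*a^2 + 6*a*n + n*(2*n+1) with hB
  have hs2 : s^2 = 4*m₁*B := by
    have h : 6 * s^2 = 6 * (4*m₁*B) := by rw [h6]; ring
    exact Nat.eq_of_mul_eq_mul_left (by norm_num) h
  -- 3 ∤ B
  obtain ⟨k, hk⟩ : ∃ k, n = 3*k + 2 := by
    obtain ⟨t, ht⟩ := h3
    exact ⟨24*t - 1, by omega⟩
  have hBeq : B = 3*(2*a^2 + 6*a*k + 4*a + 6*k^2 + 9*k + 3) + 1 := by
    rw [hB, hk]; ring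
  have hB3 : ¬ (3 ∣ B) := by omega
  have hBne : B ≠ 0 := by omega
  haveI : Fact (Nat.Prime 3) := ⟨by norm_num⟩
  have hv : padicValNat 3 (s^2) = padicValNat 3 (4*m₁) + padicValNat 3 B := by
    rw [hs2, padicValNat.mul (by positivity) hBne]
  have h4 : padicValNat 3 (4*m₁) = padicValNat 3 m₁ := by
    rw [padicValNat.mul (by norm_num) (by omega),
      padicValNat.eq_zero_of_not_dvd (by norm_num)]
    omega
  have hvs : padicValNat 3 (s^2) = 2 * padicValNat 3 s := by
    rw [padicValNat.pow s 2]
  rw [hvs, h4, padicValNat.eq_zero_of_not_dvd hB3] at hv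
  obtain ⟨j, hj⟩ := hodd
  omega

theorem stmt (M a s m₁ : ℕ) (hM : 1 < M) (ha : 1 ≤ a) (hs : 1 ≤ s)
    (hsum : ∑ i ∈ Finset.range M, (a + i) ^ 2 = s ^ 2)
    (hm : 1 ≤ m₁) (hMeq : M = 24 * m₁) :
    ∀ i : ℕ, 1 ≤ i →
      ¬ m₁ ≡ 3 ^ (2 * i - 1) [MOD 3 ^ (2 * i)] ∧ ¬ m₁ ≡ 2 * 3 ^ (2 * i - 1) [MOD 3 ^ (2 * i)] := by
  subst hMeq
  intro i hi
  constructor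
  · intro h
    have := val_of_mod m₁ 1 i (Or.inl rfl) hi (by simpa using h)
    exact key a s m₁ ha hs hsum hm this.2 (this.1 ▸ ⟨i-1, by omega⟩)
  · intro h
    have := val_of_mod m₁ 2 i (Or.inr rfl) hi h
    exact key a s m₁ ha hs hsum hm this.2 (this.1 ▸ ⟨i-1, by omega⟩)
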